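/- arXiv:2002.07367 — 3 statements merged into one kernel-verified Lean document; each statement's English description precedes it below -/
import Mathlib

section
/- Let C ≥ 1/d and p ≥ 1. Then the distributional sliced-Wasserstein distance satisfies DSW_p(μ,ν;C) ≥ (1/d)^{1/p} · maxSW_p(μ,ν). -/
open MeasureTheory
open scoped ENNReal
noncomputable section

abbrev Euc (d : ℕ) := EuclideanSpace ℝ (Fin d)

/-- The set of couplings of two measures. -/
def couplings {X : Type*} [MeasurableSpace X] (μ ν : Measure X) : Set (Measure (X × X)) :=
  {π | π.map Prod.fst = μ ∧ π.map Prod.snd = ν}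

/-- `p`-th power of the `p`-Wasserstein distance. -/
def Wpp {X : Type*} [MeasurableSpace X] [PseudoMetricSpace X] (p : ℝ) (μ ν : Measure X) : ℝ≥0∞ :=
  ⨅ π ∈ couplings μ ν, ∫⁻ z, ENNReal.ofReal (dist z.1 z.2 ^ p) ∂π

/-- The `p`-Wasserstein distance. -/
def Wp {X : Type*} [MeasurableSpace X] [PseudoMetricSpace X] (p : ℝ) (μ ν : Measure X) : ℝ≥0∞ :=
  (Wpp p μ ν) ^ (1 / p)

/-- Projection onto direction `θ`. -/
def proj {d : ℕ} (θ : Euc d) (x : Euc d) : ℝ := (inner ℝ x θ : ℝ)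

/-- Pushforward of a measure under the projection onto `θ`. -/
def projMap {d : ℕ} (θ : Euc d) (μ : Measure (Euc d)) : Measure ℝ := μ.map (proj θ)

/-- Finite `p`-th moment. -/
def finiteMoment {d : ℕ} (p : ℝ) (μ : Measure (Euc d)) : Prop :=
  ∫⁻ x, ENNReal.ofReal (‖x‖ ^ p) ∂μ < ⊤

/-- The unit sphere in `ℝ^d`. -/
def Sph (d : ℕ) : Set (Euc d) := Metric.sphere 0 1

/-- Expected absolute pairwise cosine `E_{θ,θ'∼σ}[|⟨θ,θ'⟩|]`. -/
def cosExp {d : ℕ} (σ : Measure (Sph d)) : ℝ≥0∞ :=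
  ∫⁻ q, ENNReal.ofReal |(inner ℝ (q.1 : Euc d) (q.2 : Euc d) : ℝ)| ∂(σ.prod σ)

/-- The constraint set `M_C`. -/
def MC (d : ℕ) (C : ℝ) : Set (Measure (Sph d)) :=
  {σ | IsProbabilityMeasure σ ∧ cosExp σ ≤ ENNReal.ofReal C}

/-- Distributional sliced Wasserstein distance. -/
def DSW {d : ℕ} (p : ℝ) (C : ℝ) (μ ν : Measure (Euc d)) : ℝ≥0∞ :=
  ⨆ σ ∈ MC d C,
    (∫⁻ θ : Sph d, Wpp p (projMap (θ : Euc d) μ) (projMap (θ : Euc d) ν) ∂σ) ^ (1 / p)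

/-- Max sliced Wasserstein distance. -/
def maxSW {d : ℕ} (p : ℝ) (μ ν : Measure (Euc d)) : ℝ≥0∞ :=
  ⨆ θ ∈ Sph d, Wp p (projMap θ μ) (projMap θ ν)

/-- The uniform (normalized) probability measure on the unit sphere. -/
def unifSphere (d : ℕ) : Measure (Sph d) :=
  ((volume : Measure (Euc d)).toSphere Set.univ)⁻¹ • (volume : Measure (Euc d)).toSphere

/-- Sliced Wasserstein distance. -/
def SW {d : ℕ} (p : ℝ) (μ ν : Measure (Euc d)) : ℝ≥0∞ :=
  (∫⁻ θ : Sph d, Wpp p (projMap (θ : Euc d) μ) (projMap (θ : Euc d) ν) ∂(unifSphere d)) ^ (1 / p)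

lemma exists_onb {d : ℕ} (hd : 1 ≤ d) (θ : Euc d) (hθ : ‖θ‖ = 1) :
    ∃ b : OrthonormalBasis (Fin d) ℝ (Euc d), b ⟨0, hd⟩ = θ := by
  have h : Orthonormal ℝ (({⟨0, hd⟩} : Set (Fin d)).restrict (fun _ => θ)) := by
    constructor
    · intro i; exact hθ
    · intro i j hij
      exact absurd (Subsingleton.elim i j) hij
  obtain ⟨b, hb⟩ := h.exists_orthonormalBasis_extension_of_card_eq (by simp)
  exact ⟨b, hb _ rfl⟩

theorem stmt5 {d : ℕ} (hd : 1 ≤ d) (p C : ℝ) (hp : 1 ≤ p) (hC : 1 / (d : ℝ) ≤ C)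
    (μ ν : Measure (Euc d)) [IsProbabilityMeasure μ] [IsProbabilityMeasure ν]
    (hμ : finiteMoment p μ) (hν : finiteMoment p ν)
    (hatt : ∃ θ ∈ Sph d, Wp p (projMap θ μ) (projMap θ ν) = maxSW p μ ν) :
    ENNReal.ofReal ((1 / (d : ℝ)) ^ (1 / p)) * maxSW p μ ν ≤ DSW p C μ ν := by
  obtain ⟨θs, hθs, hWeq⟩ := hatt
  have hθnorm : ‖θs‖ = 1 := by simpa [Sph] using hθs
  obtain ⟨b, hb0⟩ := exists_onb hd θs hθnorm
  have hdpos : (0 : ℝ) < d := by exact_mod_cast hd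
  have hdne : (d : ℝ≥0∞) ≠ 0 := Nat.cast_ne_zero.mpr (by omega)
  have hinv : ((d : ℝ≥0∞))⁻¹ = ENNReal.ofReal (1 / (d : ℝ)) := by
    rw [one_div, ENNReal.ofReal_inv_of_pos hdpos, ENNReal.ofReal_natCast]
  -- points on the sphere
  have hmem : ∀ i : Fin d, (b i : Euc d) ∈ Sph d := fun i => by
    simp [Sph, b.orthonormal.1 i]
  set e : Fin d → Sph d := fun i => ⟨b i, hmem i⟩ with he
  -- the discrete measure
  set σ : Measure (Sph d) := ((d : ℝ≥0∞))⁻¹ • ∑ i : Fin d, Measure.dirac (e i) with hσ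
  have hσuniv : σ Set.univ = 1 := by
    simp [hσ, Measure.smul_apply, Measure.finset_sum_apply, smul_eq_mul,
      ENNReal.inv_mul_cancel hdne (by simp)]
  have hσprob : IsProbabilityMeasure σ := ⟨hσuniv⟩
  -- lintegral against σ
  have hlint : ∀ f : Sph d → ℝ≥0∞,
      ∫⁻ x, f x ∂σ = ((d : ℝ≥0∞))⁻¹ * ∑ i : Fin d, f (e i) := by
    intro f
    rw [hσ, lintegral_smul_measure, lintegral_finset_sum_measure]
    simp [lintegral_dirac]
  -- cosExp bound
  have hcos : cosExp σ ≤ ENNReal.ofReal C := by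
    have hmeas : Measurable fun q : Sph d × Sph d =>
        ENNReal.ofReal |(inner ℝ (q.1 : Euc d) (q.2 : Euc d) : ℝ)| := by
      apply ENNReal.measurable_ofReal.comp
      apply Continuous.measurable
      exact (continuous_inner.comp
        ((continuous_subtype_val.comp continuous_fst).prodMk
          (continuous_subtype_val.comp continuous_snd))).abs
    have : cosExp σ = ((d : ℝ≥0∞))⁻¹ := by
      haveI := hσprob
      rw [cosExp, lintegral_prod _ hmeas.aemeasurable]
      have inner_eq : ∀ i j : Fin d,
          ENNReal.ofReal |(inner ℝ (e i : Euc d) (e j : Euc d) : ℝ)| =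
            if i = j then 1 else 0 := by
        intro i j
        have := b.orthonormal
        rw [orthonormal_iff_ite] at this
        have h2 : (inner ℝ (e i : Euc d) (e j : Euc d) : ℝ) = if i = j then 1 else 0 := this i j
        rw [h2]
        by_cases hij : i = j <;> simp [hij]
      rw [hlint]
      have : ∀ i : Fin d,
          (∫⁻ y, ENNReal.ofReal |(inner ℝ (e i : Euc d) (y : Euc d) : ℝ)| ∂σ) = ((d : ℝ≥0∞))⁻¹ := by
        intro i
        rw [hlint]
        simp only [inner_eq]
        rw [Finset.sum_ite_eq]
        simp
      simp only [this]
      rw [Finset.sum_const, Finset.card_univ, Fintype.card_fin, nsmul_eq_mul,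
        ← mul_assoc, mul_comm ((d : ℝ≥0∞))⁻¹ (d : ℝ≥0∞),
        ENNReal.mul_inv_cancel hdne (by simp), one_mul]
    rw [this, hinv]
    exact ENNReal.ofReal_le_ofReal hC
  have hσMC : σ ∈ MC d C := ⟨hσprob, hcos⟩
  -- lower bound term
  have hkey : ENNReal.ofReal ((1 / (d : ℝ)) ^ (1 / p)) * maxSW p μ ν ≤
      (∫⁻ θ : Sph d, Wpp p (projMap (θ : Euc d) μ) (projMap (θ : Euc d) ν) ∂σ) ^ (1 / p) := by
    rw [hlint]
    set i0 : Fin d := ⟨0, hd⟩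
    have hterm : Wpp p (projMap θs μ) (projMap θs ν) ≤
        ∑ i : Fin d, Wpp p (projMap (e i : Euc d) μ) (projMap (e i : Euc d) ν) := by
      have : Wpp p (projMap (e i0 : Euc d) μ) (projMap (e i0 : Euc d) ν) =
          Wpp p (projMap θs μ) (projMap θs ν) := by
        simp [he, hb0]
      rw [← this]
      exact Finset.single_le_sum (f := fun i => Wpp p (projMap (e i : Euc d) μ) (projMap (e i : Euc d) ν)) (fun i _ => zero_le) (Finset.mem_univ i0)
    calc ENNReal.ofReal ((1 / (d : ℝ)) ^ (1 / p)) * maxSW p μ ν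
        = ((d : ℝ≥0∞))⁻¹ ^ (1 / p) * (Wpp p (projMap θs μ) (projMap θs ν)) ^ (1 / p) := by
          rw [← hWeq, Wp]
          congr 1
          rw [hinv]
          exact (ENNReal.ofReal_rpow_of_pos (by positivity)).symm
      _ = (((d : ℝ≥0∞))⁻¹ * Wpp p (projMap θs μ) (projMap θs ν)) ^ (1 / p) := by
          rw [ENNReal.mul_rpow_of_nonneg _ _ (by positivity)]
      _ ≤ (((d : ℝ≥0∞))⁻¹ * ∑ i : Fin d,
            Wpp p (projMap (e i : Euc d) μ) (projMap (e i : Euc d) ν)) ^ (1 / p) := by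
          exact ENNReal.rpow_le_rpow (mul_le_mul_right hterm _) (by positivity)
  refine hkey.trans ?_
  exact le_iSup₂_of_le σ hσMC le_rfl
end
end

section
/- For any p ≥ 1 and admissible C > 0, the distributional sliced-Wasserstein distance satisfies the triangle inequality: DSW_p(μ_1, μ_2; C) ≤ DSW_p(μ_1, μ_3; C) + DSW_p(μ_3, μ_2; C) for all Borel probability measures μ_1, μ_2, μ_3 on R^d with finite p-th moments. -/
open MeasureTheory
open scoped ENNReal
noncomputable section

open ProbabilityTheory

lemma coupling_isProb {X : Type*} [MeasurableSpace X] {μ ν : Measure X} [IsProbabilityMeasure μ]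
    {π : Measure (X × X)} (h : π ∈ couplings μ ν) : IsProbabilityMeasure π := by
  constructor
  have h1 : π.map Prod.fst Set.univ = 1 := by rw [h.1]; exact measure_univ
  rwa [Measure.map_apply measurable_fst MeasurableSet.univ, Set.preimage_univ] at h1

lemma wpp_le_of_coupling {X : Type*} [MeasurableSpace X] [PseudoMetricSpace X] (p : ℝ)
    {μ ν : Measure X} {π : Measure (X × X)} (h : π ∈ couplings μ ν) :
    Wpp p μ ν ≤ ∫⁻ z, ENNReal.ofReal (dist z.1 z.2 ^ p) ∂π :=
  iInf₂_le π h

lemma measurable_cost (p : ℝ) :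
    Measurable fun z : ℝ × ℝ => ENNReal.ofReal (dist z.1 z.2 ^ p) :=
  ((measurable_fst.dist measurable_snd).pow_const p).ennreal_ofReal

set_option maxHeartbeats 1000000 in
lemma wp_le_coupling_sum (p : ℝ) (hp : 1 ≤ p) (μ ν κ : Measure ℝ)
    [IsProbabilityMeasure μ] [IsProbabilityMeasure ν] [IsProbabilityMeasure κ]
    {π₁ π₂ : Measure (ℝ × ℝ)} (h1 : π₁ ∈ couplings μ κ) (h2 : π₂ ∈ couplings κ ν) :
    Wp p μ ν ≤ (∫⁻ z, ENNReal.ofReal (dist z.1 z.2 ^ p) ∂π₁) ^ (1/p)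
      + (∫⁻ z, ENNReal.ofReal (dist z.1 z.2 ^ p) ∂π₂) ^ (1/p) := by
  have hp0 : (0:ℝ) < p := lt_of_lt_of_le zero_lt_one hp
  haveI := coupling_isProb h1
  haveI := coupling_isProb h2
  set ρ : Measure (ℝ × ℝ) := π₁.map Prod.swap with hρ
  haveI : IsProbabilityMeasure ρ := Measure.isProbabilityMeasure_map measurable_swap.aemeasurable
  have hρfst : ρ.fst = κ := by
    rw [Measure.fst, hρ, Measure.map_map measurable_fst measurable_swap]
    exact h1.2
  have hπ2fst : π₂.fst = κ := by rw [Measure.fst]; exact h2.1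
  set κ₁ := ρ.condKernel with hκ₁
  set κ₂ := π₂.condKernel with hκ₂
  have hd1 : κ ⊗ₘ κ₁ = ρ := by rw [← hρfst, hκ₁]; exact ρ.disintegrate ρ.condKernel
  have hd2 : κ ⊗ₘ κ₂ = π₂ := by rw [← hπ2fst, hκ₂]; exact π₂.disintegrate π₂.condKernel
  set γ : Measure (ℝ × ℝ × ℝ) := κ ⊗ₘ (κ₁ ×ₖ κ₂) with hγ
  have hmeas12 : Measurable (fun z : ℝ × ℝ × ℝ => (z.2.1, z.2.2)) :=
    (measurable_snd.fst).prodMk (measurable_snd.snd)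
  set π : Measure (ℝ × ℝ) := γ.map (fun z => (z.2.1, z.2.2)) with hπdef
  -- the common computation of marginals of γ
  have hset1 : ∀ s : Set ℝ, MeasurableSet s →
      γ (Set.univ ×ˢ (s ×ˢ Set.univ)) = ∫⁻ x, κ₁ x s ∂κ := by
    intro s hs
    rw [hγ, Measure.compProd_apply_prod MeasurableSet.univ (hs.prod MeasurableSet.univ)]
    rw [setLIntegral_univ]
    refine lintegral_congr fun x => ?_
    rw [Kernel.prod_apply, Measure.prod_prod, measure_univ, mul_one]
  have hset2 : ∀ s : Set ℝ, MeasurableSet s →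
      γ (Set.univ ×ˢ (Set.univ ×ˢ s)) = ∫⁻ x, κ₂ x s ∂κ := by
    intro s hs
    rw [hγ, Measure.compProd_apply_prod MeasurableSet.univ (MeasurableSet.univ.prod hs)]
    rw [setLIntegral_univ]
    refine lintegral_congr fun x => ?_
    rw [Kernel.prod_apply, Measure.prod_prod, measure_univ, one_mul]
  have hmarg1 : π.map Prod.fst = μ := by
    ext s hs
    rw [hπdef, Measure.map_map measurable_fst hmeas12]
    have heq : (Prod.fst ∘ fun z : ℝ × ℝ × ℝ => (z.2.1, z.2.2)) = fun z : ℝ × ℝ × ℝ => z.2.1 := rfl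
    rw [heq, Measure.map_apply (measurable_snd.fst) hs]
    have hpre : (fun z : ℝ × ℝ × ℝ => z.2.1) ⁻¹' s = Set.univ ×ˢ (s ×ˢ Set.univ) := by
      ext z; simp
    rw [hpre, hset1 s hs]
    -- now compute μ s
    have hμs : μ s = ∫⁻ x, κ₁ x s ∂κ := by
      have h1' : μ s = π₁ (Prod.fst ⁻¹' s) := by
        rw [← h1.1, Measure.map_apply measurable_fst hs]
      have h2' : π₁ (Prod.fst ⁻¹' s) = ρ (Set.univ ×ˢ s) := by
        rw [hρ, Measure.map_apply measurable_swap (MeasurableSet.univ.prod hs)]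
        congr 1
        ext z; simp
      rw [h1', h2', ← hd1, Measure.compProd_apply_prod MeasurableSet.univ hs, setLIntegral_univ]
    rw [hμs]
  have hmarg2 : π.map Prod.snd = ν := by
    ext s hs
    rw [hπdef, Measure.map_map measurable_snd hmeas12]
    have heq : (Prod.snd ∘ fun z : ℝ × ℝ × ℝ => (z.2.1, z.2.2)) = fun z : ℝ × ℝ × ℝ => z.2.2 := rfl
    rw [heq, Measure.map_apply (measurable_snd.snd) hs]
    have hpre : (fun z : ℝ × ℝ × ℝ => z.2.2) ⁻¹' s = Set.univ ×ˢ (Set.univ ×ˢ s) := by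
      ext z; simp
    rw [hpre, hset2 s hs]
    have hνs : ν s = ∫⁻ x, κ₂ x s ∂κ := by
      have h1' : ν s = π₂ (Prod.snd ⁻¹' s) := by
        rw [← h2.2, Measure.map_apply measurable_snd hs]
      have h2' : π₂ (Prod.snd ⁻¹' s) = π₂ (Set.univ ×ˢ s) := by
        congr 1; ext z; simp
      rw [h1', h2', ← hd2, Measure.compProd_apply_prod MeasurableSet.univ hs, setLIntegral_univ]
    rw [hνs]
  have hcoupling : π ∈ couplings μ ν := ⟨hmarg1, hmarg2⟩
  -- cost estimates
  set F : ℝ × ℝ × ℝ → ℝ≥0∞ := fun z => ENNReal.ofReal (dist z.2.1 z.1) with hFdef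
  set G : ℝ × ℝ × ℝ → ℝ≥0∞ := fun z => ENNReal.ofReal (dist z.1 z.2.2) with hGdef
  have hF : Measurable F := ((measurable_snd.fst).dist measurable_fst).ennreal_ofReal
  have hG : Measurable G := (measurable_fst.dist (measurable_snd.snd)).ennreal_ofReal
  have hcost : ∫⁻ z, ENNReal.ofReal (dist z.1 z.2 ^ p) ∂π
      = ∫⁻ z : ℝ × ℝ × ℝ, ENNReal.ofReal (dist z.2.1 z.2.2 ^ p) ∂γ := by
    rw [hπdef, lintegral_map (measurable_cost p) hmeas12]
  have hptwise : ∀ z : ℝ × ℝ × ℝ, ENNReal.ofReal (dist z.2.1 z.2.2 ^ p) ≤ ((F + G) z) ^ p := by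
    intro z
    rw [← ENNReal.ofReal_rpow_of_nonneg dist_nonneg hp0.le]
    refine ENNReal.rpow_le_rpow ?_ hp0.le
    calc ENNReal.ofReal (dist z.2.1 z.2.2)
        ≤ ENNReal.ofReal (dist z.2.1 z.1 + dist z.1 z.2.2) :=
          ENNReal.ofReal_le_ofReal (dist_triangle _ _ _)
      _ = F z + G z := ENNReal.ofReal_add dist_nonneg dist_nonneg
      _ = (F + G) z := rfl
  have mink := ENNReal.lintegral_Lp_add_le (μ := γ) hF.aemeasurable hG.aemeasurable hp
  have hFint : ∫⁻ z, F z ^ p ∂γ = ∫⁻ z, ENNReal.ofReal (dist z.1 z.2 ^ p) ∂π₁ := by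
    rw [hγ, Measure.lintegral_compProd (hF.pow_const p)]
    have step1 : ∀ x : ℝ, ∫⁻ y, ENNReal.ofReal (dist y.1 x) ^ p ∂(κ₁ ×ₖ κ₂) x
        = ∫⁻ b, ENNReal.ofReal (dist b x) ^ p ∂κ₁ x := by
      intro x
      rw [Kernel.lintegral_prod _ _ _ (((measurable_fst.dist measurable_const)).ennreal_ofReal.pow_const p)]
      refine lintegral_congr fun b => ?_
      simp only []
      rw [lintegral_const, measure_univ, mul_one]
    calc ∫⁻ x, ∫⁻ y, F (x, y) ^ p ∂(κ₁ ×ₖ κ₂) x ∂κ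
        = ∫⁻ x, ∫⁻ b, ENNReal.ofReal (dist b x) ^ p ∂κ₁ x ∂κ := lintegral_congr step1
      _ = ∫⁻ w : ℝ × ℝ, ENNReal.ofReal (dist w.2 w.1) ^ p ∂(κ ⊗ₘ κ₁) := by
          rw [Measure.lintegral_compProd ((measurable_snd.dist measurable_fst).ennreal_ofReal.pow_const p)]
      _ = ∫⁻ w : ℝ × ℝ, ENNReal.ofReal (dist w.2 w.1) ^ p ∂ρ := by rw [hd1]
      _ = ∫⁻ z : ℝ × ℝ, ENNReal.ofReal (dist z.1 z.2) ^ p ∂π₁ := by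
          rw [hρ, lintegral_map ((measurable_snd.dist measurable_fst).ennreal_ofReal.pow_const p)
            measurable_swap]
          simp only [Prod.fst_swap, Prod.snd_swap]
      _ = ∫⁻ z, ENNReal.ofReal (dist z.1 z.2 ^ p) ∂π₁ := by
          refine lintegral_congr fun z => ?_
          rw [ENNReal.ofReal_rpow_of_nonneg dist_nonneg hp0.le]
  have hGint : ∫⁻ z, G z ^ p ∂γ = ∫⁻ z, ENNReal.ofReal (dist z.1 z.2 ^ p) ∂π₂ := by
    rw [hγ, Measure.lintegral_compProd (hG.pow_const p)]
    have step1 : ∀ x : ℝ, ∫⁻ y, ENNReal.ofReal (dist x y.2) ^ p ∂(κ₁ ×ₖ κ₂) x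
        = ∫⁻ c, ENNReal.ofReal (dist x c) ^ p ∂κ₂ x := by
      intro x
      rw [Kernel.lintegral_prod _ _ _ (((measurable_const.dist measurable_snd)).ennreal_ofReal.pow_const p)]
      simp only []
      rw [lintegral_const, measure_univ, mul_one]
    calc ∫⁻ x, ∫⁻ y, G (x, y) ^ p ∂(κ₁ ×ₖ κ₂) x ∂κ
        = ∫⁻ x, ∫⁻ c, ENNReal.ofReal (dist x c) ^ p ∂κ₂ x ∂κ := lintegral_congr step1
      _ = ∫⁻ w : ℝ × ℝ, ENNReal.ofReal (dist w.1 w.2) ^ p ∂(κ ⊗ₘ κ₂) := by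
          rw [Measure.lintegral_compProd ((measurable_fst.dist measurable_snd).ennreal_ofReal.pow_const p)]
      _ = ∫⁻ z : ℝ × ℝ, ENNReal.ofReal (dist z.1 z.2) ^ p ∂π₂ := by rw [hd2]
      _ = ∫⁻ z, ENNReal.ofReal (dist z.1 z.2 ^ p) ∂π₂ := by
          refine lintegral_congr fun z => ?_
          rw [ENNReal.ofReal_rpow_of_nonneg dist_nonneg hp0.le]
  calc Wp p μ ν = (Wpp p μ ν) ^ (1/p) := rfl
    _ ≤ (∫⁻ z : ℝ × ℝ × ℝ, ((F + G) z) ^ p ∂γ) ^ (1/p) := by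
        refine ENNReal.rpow_le_rpow ?_ (by positivity)
        refine (wpp_le_of_coupling p hcoupling).trans ?_
        rw [hcost]
        exact lintegral_mono hptwise
    _ ≤ (∫⁻ z, F z ^ p ∂γ) ^ (1/p) + (∫⁻ z, G z ^ p ∂γ) ^ (1/p) := mink
    _ = _ := by rw [hFint, hGint]

lemma rpow_inv_rpow_self {p : ℝ} (hp0 : p ≠ 0) (x : ℝ≥0∞) : (x ^ (1/p)) ^ p = x := by
  rw [← ENNReal.rpow_mul, one_div_mul_cancel hp0, ENNReal.rpow_one]

lemma rpow_self_rpow_inv {p : ℝ} (hp0 : p ≠ 0) (x : ℝ≥0∞) : (x ^ p) ^ (1/p) = x := by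
  rw [← ENNReal.rpow_mul, mul_one_div_cancel hp0, ENNReal.rpow_one]

lemma wp_triangle (p : ℝ) (hp : 1 ≤ p) (μ ν κ : Measure ℝ)
    [IsProbabilityMeasure μ] [IsProbabilityMeasure ν] [IsProbabilityMeasure κ] :
    Wp p μ ν ≤ Wp p μ κ + Wp p κ ν := by
  have hp0 : (0:ℝ) < p := lt_of_lt_of_le zero_lt_one hp
  rcases eq_or_ne (Wp p μ κ) ⊤ with ha | ha
  · rw [ha, top_add]; exact le_top
  rcases eq_or_ne (Wp p κ ν) ⊤ with hb | hb
  · rw [hb, add_top]; exact le_top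
  refine ENNReal.le_of_forall_pos_le_add fun ε hε _ => ?_
  have hεhalf : (0:ℝ≥0∞) < (ε:ℝ≥0∞)/2 := by
    simp only [ENNReal.div_pos_iff]
    exact ⟨by exact_mod_cast hε.ne', ENNReal.ofNat_ne_top⟩
  have hchoose : ∀ (μ' ν' : Measure ℝ), IsProbabilityMeasure μ' → IsProbabilityMeasure ν' →
      Wp p μ' ν' ≠ ⊤ →
      ∃ π ∈ couplings μ' ν',
        (∫⁻ z, ENNReal.ofReal (dist z.1 z.2 ^ p) ∂π) ^ (1/p) ≤ Wp p μ' ν' + (ε:ℝ≥0∞)/2 := by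
    intro μ' ν' _ _ hfin
    have hlt : Wpp p μ' ν' < (Wp p μ' ν' + (ε:ℝ≥0∞)/2) ^ p := by
      have h1 : Wp p μ' ν' < Wp p μ' ν' + (ε:ℝ≥0∞)/2 := ENNReal.lt_add_right hfin hεhalf.ne'
      have h2 := ENNReal.rpow_lt_rpow h1 hp0
      rw [Wp] at h2
      rwa [rpow_inv_rpow_self hp0.ne' (Wpp p μ' ν')] at h2
    rw [Wpp] at hlt
    simp only [iInf_lt_iff] at hlt
    obtain ⟨π, hπ, hI⟩ := hlt
    refine ⟨π, hπ, ?_⟩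
    have := ENNReal.rpow_le_rpow hI.le (le_of_lt (by positivity : (0:ℝ) < 1/p))
    rwa [rpow_self_rpow_inv hp0.ne'] at this
  obtain ⟨π₁, hπ₁, hI1⟩ := hchoose μ κ inferInstance inferInstance ha
  obtain ⟨π₂, hπ₂, hI2⟩ := hchoose κ ν inferInstance inferInstance hb
  calc Wp p μ ν ≤ (∫⁻ z, ENNReal.ofReal (dist z.1 z.2 ^ p) ∂π₁) ^ (1/p)
        + (∫⁻ z, ENNReal.ofReal (dist z.1 z.2 ^ p) ∂π₂) ^ (1/p) :=
      wp_le_coupling_sum p hp μ ν κ hπ₁ hπ₂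
    _ ≤ (Wp p μ κ + (ε:ℝ≥0∞)/2) + (Wp p κ ν + (ε:ℝ≥0∞)/2) := add_le_add hI1 hI2
    _ = Wp p μ κ + Wp p κ ν + ε := by
        rw [add_add_add_comm, ENNReal.add_halves]

lemma measurable_proj {d : ℕ} (θ : Euc d) : Measurable (proj θ) :=
  (continuous_id.inner continuous_const).measurable

lemma projMap_isProb {d : ℕ} (θ : Euc d) (μ : Measure (Euc d)) [IsProbabilityMeasure μ] :
    IsProbabilityMeasure (projMap θ μ) :=
  Measure.isProbabilityMeasure_map (measurable_proj θ).aemeasurable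

/-- Lipschitz-type bound for the sliced distance in the direction variable. -/
lemma wp_proj_lip {d : ℕ} (p : ℝ) (hp : 1 ≤ p) (μ : Measure (Euc d)) [IsProbabilityMeasure μ]
    (θ θ' : Euc d) :
    Wp p (projMap θ μ) (projMap θ' μ)
      ≤ ENNReal.ofReal ‖θ - θ'‖ * (∫⁻ x, ENNReal.ofReal (‖x‖ ^ p) ∂μ) ^ (1/p) := by
  have hp0 : (0:ℝ) < p := lt_of_lt_of_le zero_lt_one hp
  have hmeas : Measurable (fun x : Euc d => (proj θ x, proj θ' x)) :=
    (measurable_proj θ).prodMk (measurable_proj θ')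
  set π : Measure (ℝ × ℝ) := μ.map (fun x => (proj θ x, proj θ' x)) with hπ
  have hπc : π ∈ couplings (projMap θ μ) (projMap θ' μ) := by
    constructor
    · rw [hπ, Measure.map_map measurable_fst hmeas]; rfl
    · rw [hπ, Measure.map_map measurable_snd hmeas]; rfl
  have key := wpp_le_of_coupling p hπc
  rw [hπ, lintegral_map (measurable_cost p) hmeas] at key
  have hbound : ∀ x : Euc d, ENNReal.ofReal (dist (proj θ x) (proj θ' x) ^ p)
      ≤ ENNReal.ofReal (‖θ - θ'‖ ^ p) * ENNReal.ofReal (‖x‖ ^ p) := by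
    intro x
    rw [← ENNReal.ofReal_mul (by positivity)]
    refine ENNReal.ofReal_le_ofReal ?_
    rw [← Real.mul_rpow (norm_nonneg _) (norm_nonneg x)]
    refine Real.rpow_le_rpow dist_nonneg ?_ hp0.le
    rw [Real.dist_eq, proj, proj, ← inner_sub_right]
    calc |(inner ℝ x (θ - θ') : ℝ)| ≤ ‖x‖ * ‖θ - θ'‖ := abs_real_inner_le_norm x (θ - θ')
      _ = ‖θ - θ'‖ * ‖x‖ := mul_comm _ _
  have hWpp : Wpp p (projMap θ μ) (projMap θ' μ)
      ≤ ENNReal.ofReal (‖θ - θ'‖ ^ p) * ∫⁻ x, ENNReal.ofReal (‖x‖ ^ p) ∂μ := by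
    refine key.trans ?_
    rw [← lintegral_const_mul' _ _ ENNReal.ofReal_ne_top]
    exact lintegral_mono hbound
  have h2 := ENNReal.rpow_le_rpow hWpp (by positivity : (0:ℝ) ≤ 1/p)
  rw [ENNReal.mul_rpow_of_nonneg _ _ (by positivity : (0:ℝ) ≤ 1/p)] at h2
  rw [← ENNReal.ofReal_rpow_of_nonneg (norm_nonneg _) hp0.le,
    rpow_self_rpow_inv hp0.ne'] at h2
  exact h2

/-- Finiteness of the sliced distance. -/
lemma wp_proj_ne_top {d : ℕ} (p : ℝ) (hp : 1 ≤ p) (μ ν : Measure (Euc d))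
    [IsProbabilityMeasure μ] [IsProbabilityMeasure ν]
    (hμ : finiteMoment p μ) (hν : finiteMoment p ν) (θ : Euc d) :
    Wp p (projMap θ μ) (projMap θ ν) ≠ ⊤ := by
  have hp0 : (0:ℝ) < p := lt_of_lt_of_le zero_lt_one hp
  have hmeas : Measurable (fun q : Euc d × Euc d => (proj θ q.1, proj θ q.2)) :=
    ((measurable_proj θ).comp measurable_fst).prodMk ((measurable_proj θ).comp measurable_snd)
  set π : Measure (ℝ × ℝ) := (μ.prod ν).map (fun q => (proj θ q.1, proj θ q.2)) with hπ
  have hπc : π ∈ couplings (projMap θ μ) (projMap θ ν) := by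
    constructor
    · rw [hπ, Measure.map_map measurable_fst hmeas]
      have : (Prod.fst ∘ fun q : Euc d × Euc d => (proj θ q.1, proj θ q.2))
          = proj θ ∘ Prod.fst := rfl
      rw [this, ← Measure.map_map (measurable_proj θ) measurable_fst]
      have : (μ.prod ν).map Prod.fst = μ := Measure.fst_prod
      rw [this]; rfl
    · rw [hπ, Measure.map_map measurable_snd hmeas]
      have : (Prod.snd ∘ fun q : Euc d × Euc d => (proj θ q.1, proj θ q.2))
          = proj θ ∘ Prod.snd := rfl
      rw [this, ← Measure.map_map (measurable_proj θ) measurable_snd]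
      have : (μ.prod ν).map Prod.snd = ν := Measure.snd_prod
      rw [this]; rfl
  have key := wpp_le_of_coupling p hπc
  rw [hπ, lintegral_map (measurable_cost p) hmeas] at key
  set c : ℝ≥0∞ := ENNReal.ofReal (‖θ‖ ^ p) with hc
  have hbound : ∀ q : Euc d × Euc d, ENNReal.ofReal (dist (proj θ q.1) (proj θ q.2) ^ p)
      ≤ (2:ℝ≥0∞) ^ (p - 1) * (c * ENNReal.ofReal (‖q.1‖ ^ p) + c * ENNReal.ofReal (‖q.2‖ ^ p)) := by
    intro q
    have h1 : dist (proj θ q.1) (proj θ q.2) ≤ ‖θ‖ * ‖q.1‖ + ‖θ‖ * ‖q.2‖ := by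
      rw [Real.dist_eq]
      refine (abs_sub _ _).trans ?_
      gcongr
      · calc |(inner ℝ q.1 θ : ℝ)| ≤ ‖q.1‖ * ‖θ‖ := abs_real_inner_le_norm _ _
          _ = ‖θ‖ * ‖q.1‖ := mul_comm _ _
      · calc |(inner ℝ q.2 θ : ℝ)| ≤ ‖q.2‖ * ‖θ‖ := abs_real_inner_le_norm _ _
          _ = ‖θ‖ * ‖q.2‖ := mul_comm _ _
    calc ENNReal.ofReal (dist (proj θ q.1) (proj θ q.2) ^ p)
        = ENNReal.ofReal (dist (proj θ q.1) (proj θ q.2)) ^ p :=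
          (ENNReal.ofReal_rpow_of_nonneg dist_nonneg hp0.le).symm
      _ ≤ (ENNReal.ofReal (‖θ‖ * ‖q.1‖) + ENNReal.ofReal (‖θ‖ * ‖q.2‖)) ^ p := by
          refine ENNReal.rpow_le_rpow ?_ hp0.le
          rw [← ENNReal.ofReal_add (by positivity) (by positivity)]
          exact ENNReal.ofReal_le_ofReal h1
      _ ≤ (2:ℝ≥0∞) ^ (p - 1) *
          (ENNReal.ofReal (‖θ‖ * ‖q.1‖) ^ p + ENNReal.ofReal (‖θ‖ * ‖q.2‖) ^ p) :=
          ENNReal.rpow_add_le_mul_rpow_add_rpow _ _ hp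
      _ = (2:ℝ≥0∞) ^ (p - 1) * (c * ENNReal.ofReal (‖q.1‖ ^ p) + c * ENNReal.ofReal (‖q.2‖ ^ p)) := by
          have e : ∀ r : ℝ, 0 ≤ r → ENNReal.ofReal (‖θ‖ * r) ^ p = c * ENNReal.ofReal (r ^ p) := by
            intro r hr
            rw [ENNReal.ofReal_rpow_of_nonneg (by positivity) hp0.le,
              Real.mul_rpow (norm_nonneg _) hr, ENNReal.ofReal_mul (by positivity), hc]
          rw [e _ (norm_nonneg _), e _ (norm_nonneg _)]
  have hint : ∫⁻ q : Euc d × Euc d, c * ENNReal.ofReal (‖q.1‖ ^ p) + c * ENNReal.ofReal (‖q.2‖ ^ p)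
      ∂(μ.prod ν) < ⊤ := by
    have hm1f : Measurable fun q : Euc d × Euc d => ENNReal.ofReal (‖q.1‖ ^ p) :=
      (measurable_fst.norm.pow_const p).ennreal_ofReal
    have hm1s : Measurable fun q : Euc d × Euc d => ENNReal.ofReal (‖q.2‖ ^ p) :=
      (measurable_snd.norm.pow_const p).ennreal_ofReal
    rw [lintegral_add_left (hm1f.const_mul c)]
    have e1 : ∫⁻ q : Euc d × Euc d, c * ENNReal.ofReal (‖q.1‖ ^ p) ∂(μ.prod ν)
        = c * ∫⁻ x, ENNReal.ofReal (‖x‖ ^ p) ∂μ := by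
      rw [lintegral_const_mul c hm1f]
      congr 1
      rw [lintegral_prod _ hm1f.aemeasurable]
      simp [lintegral_const]
    have e2 : ∫⁻ q : Euc d × Euc d, c * ENNReal.ofReal (‖q.2‖ ^ p) ∂(μ.prod ν)
        = c * ∫⁻ x, ENNReal.ofReal (‖x‖ ^ p) ∂ν := by
      rw [lintegral_const_mul c hm1s]
      congr 1
      rw [lintegral_prod _ hm1s.aemeasurable]
      simp [lintegral_const]
    rw [e1, e2]
    exact ENNReal.add_lt_top.2 ⟨ENNReal.mul_lt_top ENNReal.ofReal_lt_top hμ,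
      ENNReal.mul_lt_top ENNReal.ofReal_lt_top hν⟩
  have hWpp : Wpp p (projMap θ μ) (projMap θ ν) < ⊤ := by
    refine lt_of_le_of_lt (key.trans (lintegral_mono hbound)) ?_
    rw [lintegral_const_mul' _ _ (by
      exact ENNReal.rpow_ne_top_of_nonneg (by linarith) (by norm_num))]
    exact ENNReal.mul_lt_top (ENNReal.rpow_lt_top_of_nonneg (by linarith) (by norm_num)) hint
  rw [Wp]
  exact (ENNReal.rpow_lt_top_of_nonneg (by positivity) hWpp.ne).ne

lemma measurable_wp_dir {d : ℕ} (p : ℝ) (hp : 1 ≤ p) (μ ν : Measure (Euc d))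
    [IsProbabilityMeasure μ] [IsProbabilityMeasure ν]
    (hμ : finiteMoment p μ) (hν : finiteMoment p ν) :
    Measurable fun θ : Euc d => Wp p (projMap θ μ) (projMap θ ν) := by
  have hp0 : (0:ℝ) < p := lt_of_lt_of_le zero_lt_one hp
  set W : Euc d → ℝ≥0∞ := fun θ => Wp p (projMap θ μ) (projMap θ ν) with hW
  set KE : ℝ≥0∞ := (∫⁻ x, ENNReal.ofReal (‖x‖ ^ p) ∂μ) ^ (1/p)
      + (∫⁻ x, ENNReal.ofReal (‖x‖ ^ p) ∂ν) ^ (1/p) with hKE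
  have hKEtop : KE ≠ ⊤ := by
    rw [hKE]
    exact (ENNReal.add_lt_top.2 ⟨ENNReal.rpow_lt_top_of_nonneg (by positivity) hμ.ne,
      ENNReal.rpow_lt_top_of_nonneg (by positivity) hν.ne⟩).ne
  set K : ℝ := KE.toReal with hK
  have hK0 : 0 ≤ K := ENNReal.toReal_nonneg
  have hWtop : ∀ θ, W θ ≠ ⊤ := fun θ => wp_proj_ne_top p hp μ ν hμ hν θ
  have hstep : ∀ θ θ' : Euc d, W θ ≤ W θ' + ENNReal.ofReal (‖θ - θ'‖ * K) := by
    intro θ θ'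
    haveI := projMap_isProb θ μ; haveI := projMap_isProb θ' μ
    haveI := projMap_isProb θ ν; haveI := projMap_isProb θ' ν
    have t1 : W θ ≤ Wp p (projMap θ μ) (projMap θ' μ) + Wp p (projMap θ' μ) (projMap θ ν) :=
      wp_triangle p hp _ _ _
    have t2 : Wp p (projMap θ' μ) (projMap θ ν)
        ≤ Wp p (projMap θ' μ) (projMap θ' ν) + Wp p (projMap θ' ν) (projMap θ ν) :=
      wp_triangle p hp _ _ _
    have l1 := wp_proj_lip p hp μ θ θ'
    have l2 := wp_proj_lip p hp ν θ' θ
    have hKEeq : ENNReal.ofReal (‖θ - θ'‖ * K) = ENNReal.ofReal ‖θ - θ'‖ * KE := by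
      rw [ENNReal.ofReal_mul (norm_nonneg _), hK, ENNReal.ofReal_toReal hKEtop]
    calc W θ ≤ Wp p (projMap θ μ) (projMap θ' μ) + Wp p (projMap θ' μ) (projMap θ ν) := t1
      _ ≤ Wp p (projMap θ μ) (projMap θ' μ)
          + (Wp p (projMap θ' μ) (projMap θ' ν) + Wp p (projMap θ' ν) (projMap θ ν)) :=
          add_le_add_right t2 _
      _ ≤ ENNReal.ofReal ‖θ - θ'‖ * (∫⁻ x, ENNReal.ofReal (‖x‖ ^ p) ∂μ) ^ (1/p)
          + (W θ' + ENNReal.ofReal ‖θ' - θ‖ * (∫⁻ x, ENNReal.ofReal (‖x‖ ^ p) ∂ν) ^ (1/p)) := by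
          exact add_le_add l1 (add_le_add_right l2 _)
      _ = W θ' + ENNReal.ofReal (‖θ - θ'‖ * K) := by
          rw [hKEeq, hKE, norm_sub_rev θ' θ, mul_add]
          ring
  set G : Euc d → ℝ := fun θ => (W θ).toReal with hG
  have hGlip : ∀ θ θ' : Euc d, G θ - G θ' ≤ K * ‖θ - θ'‖ := by
    intro θ θ'
    have h := hstep θ θ'
    have h2 : (W θ).toReal ≤ (W θ' + ENNReal.ofReal (‖θ - θ'‖ * K)).toReal :=
      ENNReal.toReal_mono (ENNReal.add_ne_top.2 ⟨hWtop θ', ENNReal.ofReal_ne_top⟩) h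
    rw [ENNReal.toReal_add (hWtop θ') ENNReal.ofReal_ne_top,
      ENNReal.toReal_ofReal (by positivity)] at h2
    have : G θ = (W θ).toReal := rfl
    have : G θ' = (W θ').toReal := rfl
    simp only [hG]
    linarith [h2]
  have hlip : LipschitzWith (Real.toNNReal K) G := by
    refine LipschitzWith.of_dist_le_mul fun θ θ' => ?_
    rw [Real.dist_eq, dist_eq_norm, Real.coe_toNNReal _ hK0, abs_sub_le_iff]
    refine ⟨hGlip θ θ', ?_⟩
    have := hGlip θ' θ
    rwa [norm_sub_rev θ' θ] at this
  have hGmeas : Measurable G := hlip.continuous.measurable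
  have heq : W = fun θ => ENNReal.ofReal (G θ) := by
    funext θ
    exact (ENNReal.ofReal_toReal (hWtop θ)).symm
  show Measurable W
  rw [heq]
  exact ENNReal.measurable_ofReal.comp hGmeas

lemma measurable_wpp_sph {d : ℕ} (p : ℝ) (hp : 1 ≤ p) (μ ν : Measure (Euc d))
    [IsProbabilityMeasure μ] [IsProbabilityMeasure ν]
    (hμ : finiteMoment p μ) (hν : finiteMoment p ν) :
    Measurable fun θ : Sph d => Wpp p (projMap (θ : Euc d) μ) (projMap (θ : Euc d) ν) := by
  have hp0 : (0:ℝ) < p := lt_of_lt_of_le zero_lt_one hp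
  have h1 : (fun θ : Euc d => Wpp p (projMap θ μ) (projMap θ ν))
      = fun θ : Euc d => (Wp p (projMap θ μ) (projMap θ ν)) ^ p := by
    funext θ
    rw [Wp, rpow_inv_rpow_self hp0.ne']
  have h2 : Measurable fun θ : Euc d => Wpp p (projMap θ μ) (projMap θ ν) := by
    rw [h1]
    exact (measurable_wp_dir p hp μ ν hμ hν).pow_const p
  exact h2.comp measurable_subtype_coe

theorem stmt7 {d : ℕ} (p C : ℝ) (hp : 1 ≤ p) (hC : 0 < C) (hMC : (MC d C).Nonempty)
    (μ₁ μ₂ μ₃ : Measure (Euc d))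
    [IsProbabilityMeasure μ₁] [IsProbabilityMeasure μ₂] [IsProbabilityMeasure μ₃]
    (h₁ : finiteMoment p μ₁) (h₂ : finiteMoment p μ₂) (h₃ : finiteMoment p μ₃) :
    DSW p C μ₁ μ₂ ≤ DSW p C μ₁ μ₃ + DSW p C μ₃ μ₂ := by
  have hp0 : (0:ℝ) < p := lt_of_lt_of_le zero_lt_one hp
  rw [DSW]
  refine iSup₂_le fun σ hσ => ?_
  haveI : IsProbabilityMeasure σ := hσ.1
  set f : Sph d → ℝ≥0∞ := fun θ => Wp p (projMap (θ : Euc d) μ₁) (projMap (θ : Euc d) μ₃)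
    with hf
  set g : Sph d → ℝ≥0∞ := fun θ => Wp p (projMap (θ : Euc d) μ₃) (projMap (θ : Euc d) μ₂)
    with hg
  have hfm : Measurable f := (measurable_wp_dir p hp μ₁ μ₃ h₁ h₃).comp measurable_subtype_coe
  have hgm : Measurable g := (measurable_wp_dir p hp μ₃ μ₂ h₃ h₂).comp measurable_subtype_coe
  have hfp : ∀ θ : Sph d, f θ ^ p = Wpp p (projMap (θ : Euc d) μ₁) (projMap (θ : Euc d) μ₃) := by
    intro θ
    simp only [hf]
    rw [Wp, rpow_inv_rpow_self hp0.ne']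
  have hgp : ∀ θ : Sph d, g θ ^ p = Wpp p (projMap (θ : Euc d) μ₃) (projMap (θ : Euc d) μ₂) := by
    intro θ
    simp only [hg]
    rw [Wp, rpow_inv_rpow_self hp0.ne']
  calc (∫⁻ θ : Sph d, Wpp p (projMap (θ : Euc d) μ₁) (projMap (θ : Euc d) μ₂) ∂σ) ^ (1/p)
      ≤ (∫⁻ θ : Sph d, ((f + g) θ) ^ p ∂σ) ^ (1/p) := by
        refine ENNReal.rpow_le_rpow (lintegral_mono fun θ => ?_) (by positivity)
        haveI := projMap_isProb (θ : Euc d) μ₁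
        haveI := projMap_isProb (θ : Euc d) μ₂
        haveI := projMap_isProb (θ : Euc d) μ₃
        have tri := wp_triangle p hp (projMap (θ : Euc d) μ₁) (projMap (θ : Euc d) μ₂)
          (projMap (θ : Euc d) μ₃)
        have e : Wpp p (projMap (θ : Euc d) μ₁) (projMap (θ : Euc d) μ₂)
            = (Wp p (projMap (θ : Euc d) μ₁) (projMap (θ : Euc d) μ₂)) ^ p := by
          rw [Wp, rpow_inv_rpow_self hp0.ne']
        rw [e]
        exact ENNReal.rpow_le_rpow tri hp0.le
    _ ≤ (∫⁻ θ, f θ ^ p ∂σ) ^ (1/p) + (∫⁻ θ, g θ ^ p ∂σ) ^ (1/p) :=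
        ENNReal.lintegral_Lp_add_le hfm.aemeasurable hgm.aemeasurable hp
    _ = (∫⁻ θ : Sph d, Wpp p (projMap (θ : Euc d) μ₁) (projMap (θ : Euc d) μ₃) ∂σ) ^ (1/p)
        + (∫⁻ θ : Sph d, Wpp p (projMap (θ : Euc d) μ₃) (projMap (θ : Euc d) μ₂) ∂σ) ^ (1/p) := by
        rw [lintegral_congr hfp, lintegral_congr hgp]
    _ ≤ DSW p C μ₁ μ₃ + DSW p C μ₃ μ₂ := by
        refine add_le_add ?_ ?_
        · rw [DSW]
          exact le_iSup₂ (f := fun σ (_ : σ ∈ MC d C) =>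
            (∫⁻ θ : Sph d, Wpp p (projMap (θ : Euc d) μ₁) (projMap (θ : Euc d) μ₃) ∂σ) ^ (1/p))
            σ hσ
        · rw [DSW]
          exact le_iSup₂ (f := fun σ (_ : σ ∈ MC d C) =>
            (∫⁻ θ : Sph d, Wpp p (projMap (θ : Euc d) μ₃) (projMap (θ : Euc d) μ₂) ∂σ) ^ (1/p))
            σ hσ
end
end

section
/- For one-dimensional probability measures μ and ν on R with finite p-th moments, the p-Wasserstein distance satisfies W_p(μ,ν) = ( ∫_0^1 |F_μ^{-1}(z) − F_ν^{-1}(z)|^p dz )^{1/p}, where F_μ^{-1} and F_ν^{-1} are the quantile functions (generalized inverses of the CDFs) of μ and ν. -/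
open MeasureTheory
open scoped ENNReal
noncomputable section

/-- The quantile function (generalized inverse CDF). -/
def quantile (μ : Measure ℝ) (z : ℝ) : ℝ := sInf {x | z ≤ (μ (Set.Iic x)).toReal}


open Set Filter ProbabilityTheory
open scoped Topology Classical

section WassersteinAux

set_option linter.unusedSectionVars false
section aux1
variable (μ : Measure ℝ) [IsProbabilityMeasure μ]

lemma qset_eq : ∀ z : ℝ, {x | z ≤ (μ (Set.Iic x)).toReal} = {x | z ≤ cdf μ x} := by
  intro z; ext x; simp [cdf_eq_real, measureReal_def]

lemma qset_nonempty {z : ℝ} (hz1 : z < 1) : {x | z ≤ cdf μ x}.Nonempty := by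
  obtain ⟨x₀, hx₀⟩ := ((tendsto_cdf_atTop μ).eventually (eventually_ge_nhds hz1)).exists
  exact ⟨x₀, hx₀⟩

lemma qset_bdd {z : ℝ} (hz0 : 0 < z) : BddBelow {x | z ≤ cdf μ x} := by
  obtain ⟨m, hm⟩ := ((tendsto_cdf_atBot μ).eventually (eventually_lt_nhds hz0)).exists
  refine ⟨m, fun w hw => ?_⟩
  by_contra h
  push_neg at h
  exact absurd (hw.trans (monotone_cdf μ h.le)) (not_le.2 hm)

lemma quantile_le_iff {z x : ℝ} (hz0 : 0 < z) (hz1 : z < 1) :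
    quantile μ z ≤ x ↔ z ≤ cdf μ x := by
  rw [quantile, qset_eq]
  constructor
  · intro h
    haveI : Nonempty {r' : ℚ // x < (r' : ℝ)} := nonempty_subtype.2 (exists_rat_gt x)
    have key : ∀ r : {r' : ℚ // x < (r' : ℝ)}, z ≤ cdf μ ((r : ℚ) : ℝ) := by
      rintro ⟨r, hr⟩
      obtain ⟨w, hwS, hw⟩ := exists_lt_of_csInf_lt (qset_nonempty μ hz1) (h.trans_lt hr)
      exact hwS.trans (monotone_cdf μ hw.le)
    calc z ≤ ⨅ r : {r' : ℚ // x < (r' : ℝ)}, cdf μ ((r : ℚ) : ℝ) := le_ciInf key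
      _ = cdf μ x := (cdf μ).iInf_rat_gt_eq x
  · intro h
    exact csInf_le (qset_bdd μ hz0) h

lemma quantile_monotoneOn : MonotoneOn (quantile μ) (Set.Ioo 0 1) := by
  intro z₁ h₁ z₂ h₂ hle
  rw [quantile, quantile, qset_eq, qset_eq]
  exact csInf_le_csInf (qset_bdd μ h₁.1) (qset_nonempty μ h₂.2) (fun x hx => hle.trans hx)

lemma quantile_aemeasurable :
    AEMeasurable (quantile μ) (volume.restrict (Set.Ioo (0:ℝ) 1)) := by
  have hcover : Set.Ioo (0:ℝ) 1 = ⋃ n : ℕ, Set.Icc (1/(n+1) : ℝ) (1 - 1/(n+1)) := by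
    ext z
    simp only [Set.mem_Ioo, Set.mem_iUnion, Set.mem_Icc]
    constructor
    · rintro ⟨h0, h1⟩
      obtain ⟨n, hn⟩ := exists_nat_one_div_lt (lt_min h0 (by linarith) : (0:ℝ) < min z (1 - z))
      have h2 := hn.trans_le (min_le_left _ _)
      have h3 := hn.trans_le (min_le_right _ _)
      exact ⟨n, h2.le, by linarith⟩
    · rintro ⟨n, hn1, hn2⟩
      have h2 : (0:ℝ) < 1/(n+1) := by positivity
      exact ⟨h2.trans_le hn1, by linarith⟩
  rw [hcover, aemeasurable_iUnion_iff]
  intro n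
  by_cases hab : (1/(n+1) : ℝ) ≤ 1 - 1/(n+1)
  · have ha0 : (0:ℝ) < 1/(n+1) := by positivity
    have hb1 : (1 - 1/(n+1) : ℝ) < 1 := by linarith
    have hsub : Set.Icc (1/(n+1) : ℝ) (1 - 1/(n+1)) ⊆ Set.Ioo (0:ℝ) 1 :=
      fun x hx => ⟨ha0.trans_le hx.1, lt_of_le_of_lt hx.2 hb1⟩
    have hclamp : ∀ z : ℝ, max (1/(n+1) : ℝ) (min z (1 - 1/(n+1))) ∈ Set.Icc (1/(n+1):ℝ) (1 - 1/(n+1)) :=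
      fun z => ⟨le_max_left _ _, max_le hab (min_le_right _ _)⟩
    have hgmono : Monotone (fun z : ℝ => quantile μ (max (1/(n+1) : ℝ) (min z (1 - 1/(n+1))))) := by
      intro z₁ z₂ hz
      exact quantile_monotoneOn μ (hsub (hclamp z₁)) (hsub (hclamp z₂))
        (max_le_max le_rfl (min_le_min hz le_rfl))
    refine (hgmono.measurable.aemeasurable).congr ?_
    filter_upwards [ae_restrict_mem measurableSet_Icc] with z hz
    rw [min_eq_left hz.2, max_eq_right hz.1]
  · rw [Set.Icc_eq_empty hab, Measure.restrict_empty]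
    exact aemeasurable_zero_measure

end aux1

section aux2
variable (μ ν : Measure ℝ) [IsProbabilityMeasure μ] [IsProbabilityMeasure ν]

lemma quantile_map_eq : (volume.restrict (Set.Ioo (0:ℝ) 1)).map (quantile μ) = μ := by
  have hQ := quantile_aemeasurable μ
  haveI : IsFiniteMeasure ((volume.restrict (Set.Ioo (0:ℝ) 1)).map (quantile μ)) := by
    constructor
    rw [Measure.map_apply_of_aemeasurable hQ MeasurableSet.univ]
    simp [Real.volume_Ioo]
  refine Measure.ext_of_Iic _ _ (fun x => ?_)
  rw [Measure.map_apply_of_aemeasurable hQ measurableSet_Iic,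
    Measure.restrict_apply' measurableSet_Ioo]
  have hpre : quantile μ ⁻¹' (Set.Iic x) ∩ Set.Ioo 0 1
      = Set.Iic (cdf μ x) ∩ Set.Ioo 0 1 := by
    ext z
    simp only [Set.mem_inter_iff, Set.mem_preimage, Set.mem_Iic, Set.mem_Ioo, and_congr_left_iff]
    intro hz
    exact quantile_le_iff μ hz.1 hz.2
  rw [hpre]
  have hc0 : 0 ≤ cdf μ x := cdf_nonneg μ x
  rcases lt_or_ge (cdf μ x) 1 with h | h
  · have : Set.Iic (cdf μ x) ∩ Set.Ioo 0 1 = Set.Ioc 0 (cdf μ x) := by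
      ext z
      simp only [Set.mem_inter_iff, Set.mem_Iic, Set.mem_Ioo, Set.mem_Ioc]
      exact ⟨fun ⟨h1, h2, _⟩ => ⟨h2, h1⟩, fun ⟨h1, h2⟩ => ⟨h2, h1, h2.trans_lt h⟩⟩
    rw [this, Real.volume_Ioc, ← ofReal_cdf μ x]
    norm_num
  · have hc1 : cdf μ x = 1 := le_antisymm (cdf_le_one μ x) h
    have : Set.Iic (cdf μ x) ∩ Set.Ioo 0 1 = Set.Ioo (0:ℝ) 1 := by
      ext z
      simp only [Set.mem_inter_iff, Set.mem_Iic, Set.mem_Ioo, hc1]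
      exact ⟨fun h => h.2, fun h => ⟨h.2.le, h⟩⟩
    rw [this, Real.volume_Ioo, ← ofReal_cdf μ x, hc1]
    norm_num

lemma pair_aemeasurable :
    AEMeasurable (fun z => (quantile μ z, quantile ν z)) (volume.restrict (Set.Ioo (0:ℝ) 1)) :=
  (quantile_aemeasurable μ).prodMk (quantile_aemeasurable ν)

lemma monoCoupling_fst :
    ((volume.restrict (Set.Ioo (0:ℝ) 1)).map (fun z => (quantile μ z, quantile ν z))).map
      Prod.fst = μ := by
  rw [AEMeasurable.map_map_of_aemeasurable measurable_fst.aemeasurable (pair_aemeasurable μ ν)]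
  exact quantile_map_eq μ

lemma monoCoupling_snd :
    ((volume.restrict (Set.Ioo (0:ℝ) 1)).map (fun z => (quantile μ z, quantile ν z))).map
      Prod.snd = ν := by
  rw [AEMeasurable.map_map_of_aemeasurable measurable_snd.aemeasurable (pair_aemeasurable μ ν)]
  exact quantile_map_eq ν

lemma monoCoupling_cost (p : ℝ) :
    ∫⁻ q, ENNReal.ofReal (|q.1 - q.2| ^ p)
        ∂((volume.restrict (Set.Ioo (0:ℝ) 1)).map (fun z => (quantile μ z, quantile ν z)))
      = ∫⁻ z in Set.Ioo (0:ℝ) 1, ENNReal.ofReal (|quantile μ z - quantile ν z| ^ p) := by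
  rw [lintegral_map' ?_ (pair_aemeasurable μ ν)]
  exact (Measurable.aemeasurable (by fun_prop))

end aux2

def Bset (s t : ℝ) : Set (ℝ × ℝ) := {q | (q.1 ≤ s ∧ t < q.2) ∨ (q.2 ≤ s ∧ t < q.1)}

lemma measurableSet_Bset (s t : ℝ) : MeasurableSet (Bset s t) := by
  rw [Bset]
  simp only [Set.setOf_or, Set.setOf_and]
  exact ((measurableSet_le measurable_fst measurable_const).inter
      (measurableSet_lt measurable_const measurable_snd)).union
    ((measurableSet_le measurable_snd measurable_const).inter
      (measurableSet_lt measurable_const measurable_fst))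

section aux3
variable (μ ν : Measure ℝ) [IsProbabilityMeasure μ] [IsProbabilityMeasure ν]

lemma lower_bound (π : Measure (ℝ × ℝ)) (hfst : π.map Prod.fst = μ)
    (hsnd : π.map Prod.snd = ν) (s t : ℝ) :
    (μ (Set.Iic s) - ν (Set.Iic t)) ⊔ (ν (Set.Iic s) - μ (Set.Iic t)) ≤ π (Bset s t) := by
  have hμs : μ (Set.Iic s) = π {q : ℝ × ℝ | q.1 ≤ s} := by
    rw [← hfst, Measure.map_apply measurable_fst measurableSet_Iic]; rfl
  have hνs : ν (Set.Iic s) = π {q : ℝ × ℝ | q.2 ≤ s} := by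
    rw [← hsnd, Measure.map_apply measurable_snd measurableSet_Iic]; rfl
  have hμt : μ (Set.Iic t) = π {q : ℝ × ℝ | q.1 ≤ t} := by
    rw [← hfst, Measure.map_apply measurable_fst measurableSet_Iic]; rfl
  have hνt : ν (Set.Iic t) = π {q : ℝ × ℝ | q.2 ≤ t} := by
    rw [← hsnd, Measure.map_apply measurable_snd measurableSet_Iic]; rfl
  refine sup_le ?_ ?_
  · rw [hμs, hνt]
    refine tsub_le_iff_right.2 ?_
    calc π {q : ℝ × ℝ | q.1 ≤ s}
        ≤ π ({q : ℝ × ℝ | q.1 ≤ s ∧ t < q.2} ∪ {q : ℝ × ℝ | q.2 ≤ t}) := by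
          refine measure_mono fun q hq => ?_
          rcases lt_or_ge t q.2 with h | h
          · exact Or.inl ⟨hq, h⟩
          · exact Or.inr h
      _ ≤ π {q : ℝ × ℝ | q.1 ≤ s ∧ t < q.2} + π {q : ℝ × ℝ | q.2 ≤ t} := measure_union_le _ _
      _ ≤ π (Bset s t) + π {q : ℝ × ℝ | q.2 ≤ t} := by
          exact add_le_add_left (measure_mono fun q hq => Or.inl hq) _
  · rw [hνs, hμt]
    refine tsub_le_iff_right.2 ?_
    calc π {q : ℝ × ℝ | q.2 ≤ s}
        ≤ π ({q : ℝ × ℝ | q.2 ≤ s ∧ t < q.1} ∪ {q : ℝ × ℝ | q.1 ≤ t}) := by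
          refine measure_mono fun q hq => ?_
          rcases lt_or_ge t q.1 with h | h
          · exact Or.inl ⟨hq, h⟩
          · exact Or.inr h
      _ ≤ π {q : ℝ × ℝ | q.2 ≤ s ∧ t < q.1} + π {q : ℝ × ℝ | q.1 ≤ t} := measure_union_le _ _
      _ ≤ π (Bset s t) + π {q : ℝ × ℝ | q.1 ≤ t} := by
          exact add_le_add_left (measure_mono fun q hq => Or.inr hq) _

lemma upper_bound {s t : ℝ} (hst : s ≤ t) :
    ((volume.restrict (Set.Ioo (0:ℝ) 1)).map (fun z => (quantile μ z, quantile ν z)))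
        (Bset s t)
      ≤ (μ (Set.Iic s) - ν (Set.Iic t)) ⊔ (ν (Set.Iic s) - μ (Set.Iic t)) := by
  rw [Measure.map_apply_of_aemeasurable (pair_aemeasurable μ ν) (measurableSet_Bset s t),
    Measure.restrict_apply' measurableSet_Ioo]
  set E := (fun z => (quantile μ z, quantile ν z)) ⁻¹' Bset s t with hE
  have hmem : ∀ z ∈ E ∩ Set.Ioo (0:ℝ) 1,
      (cdf ν t < z ∧ z ≤ cdf μ s) ∨ (cdf μ t < z ∧ z ≤ cdf ν s) := by
    rintro z ⟨hzE, hz⟩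
    have g1 := quantile_le_iff μ (x := s) hz.1 hz.2
    have g2 := quantile_le_iff ν (x := t) hz.1 hz.2
    have g3 := quantile_le_iff ν (x := s) hz.1 hz.2
    have g4 := quantile_le_iff μ (x := t) hz.1 hz.2
    rcases hzE with ⟨h1, h2⟩ | ⟨h1, h2⟩
    · exact Or.inl ⟨not_le.1 fun h => absurd (g2.2 h) (not_le.2 h2), g1.1 h1⟩
    · exact Or.inr ⟨not_le.1 fun h => absurd (g4.2 h) (not_le.2 h2), g3.1 h1⟩
  have hle1 : ENNReal.ofReal (cdf μ s - cdf ν t) ≤ μ (Set.Iic s) - ν (Set.Iic t) := by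
    rw [ENNReal.ofReal_sub _ (cdf_nonneg ν t), ofReal_cdf, ofReal_cdf]
  have hle2 : ENNReal.ofReal (cdf ν s - cdf μ t) ≤ ν (Set.Iic s) - μ (Set.Iic t) := by
    rw [ENNReal.ofReal_sub _ (cdf_nonneg μ t), ofReal_cdf, ofReal_cdf]
  by_cases h1 : ∃ z ∈ E ∩ Set.Ioo (0:ℝ) 1, cdf ν t < z ∧ z ≤ cdf μ s
  · refine le_trans ?_ (le_sup_left.trans' hle1)
    refine le_trans (measure_mono fun z hz => ?_) (le_of_eq (Real.volume_Ioc))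
    rcases hmem z hz with h | h
    · exact h
    · obtain ⟨z₁, hz₁, hz₁'⟩ := h1
      exfalso
      have c1 : cdf μ s ≤ cdf μ t := monotone_cdf μ hst
      have c2 : cdf ν s ≤ cdf ν t := monotone_cdf ν hst
      linarith [h.1, h.2, hz₁'.1, hz₁'.2]
  · refine le_trans ?_ (le_sup_right.trans' hle2)
    refine le_trans (measure_mono fun z hz => ?_) (le_of_eq (Real.volume_Ioc))
    rcases hmem z hz with h | h
    · exact absurd ⟨z, hz, h⟩ h1
    · exact h

end aux3

def Kker (p : ℝ) : ℝ × ℝ → ℝ≥0∞ :=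
  fun st => if st.1 < st.2 then ENNReal.ofReal (p*(p-1)*(st.2-st.1)^(p-2)) else 0

lemma Kker_measurable (p : ℝ) : Measurable (Kker p) := by
  refine Measurable.ite (measurableSet_lt measurable_fst measurable_snd) ?_ measurable_const
  fun_prop

-- inner integral computation
lemma inner_int {p x s y : ℝ} (hp : 1 < p) :
    ∫⁻ t, (if x ≤ s ∧ s < t ∧ t < y then ENNReal.ofReal (p*(p-1)*(t-s)^(p-2)) else 0)
      = if x ≤ s ∧ s < y then ENNReal.ofReal (p*(y-s)^(p-1)) else 0 := by
  by_cases hxs : x ≤ s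
  · have hind : ∀ t : ℝ, (if x ≤ s ∧ s < t ∧ t < y then ENNReal.ofReal (p*(p-1)*(t-s)^(p-2)) else 0)
        = (Set.Ioo s y).indicator (fun t => ENNReal.ofReal (p*(p-1)*(t-s)^(p-2))) t := by
      intro t
      rw [Set.indicator_apply]
      simp only [Set.mem_Ioo]
      by_cases h : s < t ∧ t < y
      · rw [if_pos ⟨hxs, h⟩, if_pos h]
      · rw [if_neg (fun hh => h ⟨hh.2.1, hh.2.2⟩), if_neg h]
    rw [lintegral_congr hind, lintegral_indicator measurableSet_Ioo]
    by_cases hsy : s < y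
    · rw [if_pos ⟨hxs, hsy⟩]
      have hii : IntervalIntegrable (fun t : ℝ => (t - s)^(p-2)) volume s y := by
        have h0 := (intervalIntegral.intervalIntegrable_rpow' (a := 0) (b := y - s)
          (by linarith : (-1:ℝ) < p - 2)).comp_sub_right s
        simpa using h0
      have hInt : IntegrableOn (fun t : ℝ => p*(p-1)*(t-s)^(p-2)) (Set.Ioo s y) volume := by
        refine Integrable.const_mul (hii.1.mono_set Set.Ioo_subset_Ioc_self) _
      rw [← ofReal_integral_eq_lintegral_ofReal hInt ?_]
      · congr 1
        rw [← integral_Ioc_eq_integral_Ioo, ← intervalIntegral.integral_of_le hsy.le]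
        have h1 : ∫ t in s..y, p*(p-1)*(t-s)^(p-2) = (p*(p-1)) * ∫ t in s..y, (t-s)^(p-2) := by
          simpa [mul_assoc] using intervalIntegral.integral_const_mul (μ := volume)
            (p*(p-1)) (fun t : ℝ => (t-s)^(p-2))
        rw [h1, intervalIntegral.integral_comp_sub_right (fun u : ℝ => u^(p-2)) s]
        rw [show s - s = (0:ℝ) by ring]
        rw [integral_rpow (Or.inl (by linarith : (-1:ℝ) < p - 2))]
        rw [show p - 2 + 1 = p - 1 by ring, Real.zero_rpow (by linarith : p - 1 ≠ 0)]
        have hp1 : p - 1 ≠ 0 := by linarith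
        field_simp
        ring
      · filter_upwards [ae_restrict_mem measurableSet_Ioo] with t ht
        have h2 : (0:ℝ) ≤ (t - s)^(p-2) := Real.rpow_nonneg (by linarith [ht.1]) _
        simp only [Pi.zero_apply]
        exact mul_nonneg (by nlinarith) h2
    · rw [if_neg (fun h => hsy h.2), Set.Ioo_eq_empty hsy, Measure.restrict_empty,
        lintegral_zero_measure]
  · simp only [if_neg (fun h : x ≤ s ∧ s < _ ∧ _ < y => hxs h.1),
      if_neg (fun h : x ≤ s ∧ s < y => hxs h.1), lintegral_const, zero_mul]

lemma outer_int {p x y : ℝ} (hp : 1 < p) (hxy : x ≤ y) :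
    ∫⁻ s, (if x ≤ s ∧ s < y then ENNReal.ofReal (p*(y-s)^(p-1)) else 0)
      = ENNReal.ofReal ((y-x)^p) := by
  have hind : ∀ s : ℝ, (if x ≤ s ∧ s < y then ENNReal.ofReal (p*(y-s)^(p-1)) else 0)
      = (Set.Ico x y).indicator (fun s => ENNReal.ofReal (p*(y-s)^(p-1))) s := by
    intro s; rw [Set.indicator_apply]; rfl
  rw [lintegral_congr hind, lintegral_indicator measurableSet_Ico,
    setLIntegral_congr Ico_ae_eq_Ioc]
  rcases eq_or_lt_of_le hxy with rfl | hxy'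
  · simp [Real.zero_rpow (by linarith : p ≠ 0)]
  · have hii : IntervalIntegrable (fun s : ℝ => (y - s)^(p-1)) volume x y := by
      have h0 := (intervalIntegral.intervalIntegrable_rpow' (a := y - x) (b := 0)
        (by linarith : (-1:ℝ) < p - 1))
      have := h0.comp_sub_left y
      simpa using this
    have hInt : IntegrableOn (fun s : ℝ => p*(y-s)^(p-1)) (Set.Ioc x y) volume :=
      Integrable.const_mul hii.1 _
    rw [← ofReal_integral_eq_lintegral_ofReal hInt ?_]
    · congr 1
      rw [← intervalIntegral.integral_of_le hxy'.le]
      have h1 : ∫ s in x..y, p*(y-s)^(p-1) = p * ∫ s in x..y, (y-s)^(p-1) :=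
        intervalIntegral.integral_const_mul (μ := volume) p (fun s : ℝ => (y-s)^(p-1))
      rw [h1, intervalIntegral.integral_comp_sub_left (fun u : ℝ => u^(p-1)) y]
      rw [show y - y = (0:ℝ) by ring]
      rw [integral_rpow (Or.inl (by linarith : (-1:ℝ) < p - 1))]
      rw [show p - 1 + 1 = p by ring, Real.zero_rpow (by linarith : p ≠ 0)]
      have hp0 : p ≠ 0 := by linarith
      field_simp
      rw [sub_zero]
    · filter_upwards [ae_restrict_mem measurableSet_Ioc] with s hs
      have h2 : (0:ℝ) ≤ (y - s)^(p-1) := Real.rpow_nonneg (by linarith [hs.2]) _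
      simp only [Pi.zero_apply]
      exact mul_nonneg (by linarith) h2


lemma pointwise_rep_le {p : ℝ} (hp : 1 < p) {x y : ℝ} (hxy : x ≤ y) :
    ∫⁻ st : ℝ × ℝ, (if (x,y) ∈ Bset st.1 st.2 then Kker p st else 0)
      = ENNReal.ofReal ((y - x)^p) := by
  have hcomb : ∀ st : ℝ × ℝ, (if (x,y) ∈ Bset st.1 st.2 then Kker p st else 0)
      = (if x ≤ st.1 ∧ st.1 < st.2 ∧ st.2 < y
          then ENNReal.ofReal (p*(p-1)*(st.2-st.1)^(p-2)) else 0) := by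
    rintro ⟨s, t⟩
    simp only [Bset, Kker, Set.mem_setOf_eq]
    by_cases h1 : ((x ≤ s ∧ t < y) ∨ (y ≤ s ∧ t < x))
    · rw [if_pos h1]
      by_cases h2 : s < t
      · rw [if_pos h2, if_pos]
        rcases h1 with ⟨hx, ht⟩ | ⟨hy', ht⟩
        · exact ⟨hx, h2, ht⟩
        · exact ⟨hxy.trans hy', h2, lt_of_lt_of_le ht hxy⟩
      · rw [if_neg h2, if_neg (fun h => h2 h.2.1)]
    · rw [if_neg h1, if_neg (fun h => h1 (Or.inl ⟨h.1, h.2.2⟩))]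
  have hmeas : Measurable (fun st : ℝ × ℝ => if x ≤ st.1 ∧ st.1 < st.2 ∧ st.2 < y
      then ENNReal.ofReal (p*(p-1)*(st.2-st.1)^(p-2)) else 0) := by
    refine Measurable.ite ?_ (by fun_prop) measurable_const
    simp only [Set.setOf_and]
    exact (measurableSet_le measurable_const measurable_fst).inter
      ((measurableSet_lt measurable_fst measurable_snd).inter
        (measurableSet_lt measurable_snd measurable_const))
  rw [lintegral_congr hcomb, Measure.volume_eq_prod, lintegral_prod _ hmeas.aemeasurable]
  calc ∫⁻ s, ∫⁻ t, (if x ≤ s ∧ s < t ∧ t < y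
          then ENNReal.ofReal (p*(p-1)*(t-s)^(p-2)) else 0)
      = ∫⁻ s, (if x ≤ s ∧ s < y then ENNReal.ofReal (p*(y-s)^(p-1)) else 0) :=
        lintegral_congr (fun s => inner_int hp)
    _ = ENNReal.ofReal ((y-x)^p) := outer_int hp hxy

lemma Bset_swap (s t : ℝ) (a b : ℝ) : ((a,b) ∈ Bset s t) ↔ ((b,a) ∈ Bset s t) := by
  simp only [Bset, Set.mem_setOf_eq]
  exact or_comm

lemma pointwise_rep {p : ℝ} (hp : 1 < p) (q : ℝ × ℝ) :
    ∫⁻ st : ℝ × ℝ, (if q ∈ Bset st.1 st.2 then Kker p st else 0)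
      = ENNReal.ofReal (|q.1 - q.2|^p) := by
  obtain ⟨x, y⟩ := q
  rcases le_total x y with h | h
  · rw [pointwise_rep_le hp h, abs_sub_comm, abs_of_nonneg (sub_nonneg.2 h)]
  · have : ∀ st : ℝ × ℝ, (if (x,y) ∈ Bset st.1 st.2 then Kker p st else 0)
        = (if (y,x) ∈ Bset st.1 st.2 then Kker p st else 0) := by
      intro st; rw [if_congr (Bset_swap st.1 st.2 x y) rfl rfl]
    rw [lintegral_congr this, pointwise_rep_le hp h, abs_of_nonneg (sub_nonneg.2 h)]

lemma cost_rep {p : ℝ} (hp : 1 < p) (π : Measure (ℝ × ℝ)) [IsFiniteMeasure π] :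
    ∫⁻ q, ENNReal.ofReal (|q.1 - q.2|^p) ∂π
      = ∫⁻ st : ℝ × ℝ, Kker p st * π (Bset st.1 st.2) := by
  have hmeasW : MeasurableSet {r : (ℝ × ℝ) × (ℝ × ℝ) | r.1 ∈ Bset r.2.1 r.2.2} := by
    simp only [Bset, Set.mem_setOf_eq, Set.setOf_or, Set.setOf_and]
    exact ((measurableSet_le measurable_fst.fst measurable_snd.fst).inter
        (measurableSet_lt measurable_snd.snd measurable_fst.snd)).union
      ((measurableSet_le measurable_fst.snd measurable_snd.fst).inter
        (measurableSet_lt measurable_snd.snd measurable_fst.fst))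
  have hmeas : Measurable (fun r : (ℝ × ℝ) × (ℝ × ℝ) =>
      if r.1 ∈ Bset r.2.1 r.2.2 then Kker p r.2 else 0) :=
    Measurable.ite hmeasW ((Kker_measurable p).comp measurable_snd) measurable_const
  calc ∫⁻ q, ENNReal.ofReal (|q.1 - q.2|^p) ∂π
      = ∫⁻ q, (∫⁻ st : ℝ × ℝ, (if q ∈ Bset st.1 st.2 then Kker p st else 0)) ∂π :=
        lintegral_congr (fun q => (pointwise_rep hp q).symm)
    _ = ∫⁻ st : ℝ × ℝ, (∫⁻ q, (if q ∈ Bset st.1 st.2 then Kker p st else 0) ∂π) := by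
        exact lintegral_lintegral_swap
          (f := fun q (st : ℝ × ℝ) => if q ∈ Bset st.1 st.2 then Kker p st else 0)
          hmeas.aemeasurable
    _ = ∫⁻ st : ℝ × ℝ, Kker p st * π (Bset st.1 st.2) := by
        refine lintegral_congr (fun st => ?_)
        rw [← lintegral_indicator_const (measurableSet_Bset st.1 st.2) (Kker p st)]
        refine lintegral_congr (fun q => ?_)
        rw [Set.indicator_apply]

lemma pointwise_rep_one (q : ℝ × ℝ) :
    ∫⁻ s, (if q ∈ Bset s s then (1:ℝ≥0∞) else 0) = ENNReal.ofReal (|q.1 - q.2|) := by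
  have key : ∀ x y : ℝ, x ≤ y →
      ∫⁻ s, (if (x,y) ∈ Bset s s then (1:ℝ≥0∞) else 0) = ENNReal.ofReal (y - x) := by
    intro x y hxy
    have hcond : ∀ s : ℝ, ((x,y) ∈ Bset s s) ↔ s ∈ Set.Ico x y := by
      intro s
      simp only [Bset, Set.mem_setOf_eq, Set.mem_Ico]
      constructor
      · rintro (⟨h1, h2⟩ | ⟨h1, h2⟩)
        · exact ⟨h1, h2⟩
        · exact ⟨hxy.trans h1, lt_of_lt_of_le h2 hxy⟩
      · exact fun h => Or.inl h
    have : ∀ s : ℝ, (if (x,y) ∈ Bset s s then (1:ℝ≥0∞) else 0)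
        = (Set.Ico x y).indicator (fun _ => (1:ℝ≥0∞)) s := by
      intro s
      rw [Set.indicator_apply, if_congr (hcond s) rfl rfl]
    rw [lintegral_congr this, lintegral_indicator_const measurableSet_Ico, Real.volume_Ico,
      one_mul]
  obtain ⟨x, y⟩ := q
  rcases le_total x y with h | h
  · rw [key x y h, abs_sub_comm, abs_of_nonneg (sub_nonneg.2 h)]
  · have heq : ∀ s : ℝ, (if (x,y) ∈ Bset s s then (1:ℝ≥0∞) else 0)
        = (if (y,x) ∈ Bset s s then (1:ℝ≥0∞) else 0) := by
      intro s; rw [if_congr (Bset_swap s s x y) rfl rfl]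
    rw [lintegral_congr heq, key y x h, abs_of_nonneg (sub_nonneg.2 h)]

lemma cost_rep_one (π : Measure (ℝ × ℝ)) [IsFiniteMeasure π] :
    ∫⁻ q, ENNReal.ofReal (|q.1 - q.2|) ∂π = ∫⁻ s, π (Bset s s) := by
  have hmeasW : MeasurableSet {r : (ℝ × ℝ) × ℝ | r.1 ∈ Bset r.2 r.2} := by
    simp only [Bset, Set.mem_setOf_eq, Set.setOf_or, Set.setOf_and]
    exact ((measurableSet_le measurable_fst.fst measurable_snd).inter
        (measurableSet_lt measurable_snd measurable_fst.snd)).union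
      ((measurableSet_le measurable_fst.snd measurable_snd).inter
        (measurableSet_lt measurable_snd measurable_fst.fst))
  have hmeas : Measurable (fun r : (ℝ × ℝ) × ℝ =>
      if r.1 ∈ Bset r.2 r.2 then (1:ℝ≥0∞) else 0) :=
    Measurable.ite hmeasW measurable_const measurable_const
  calc ∫⁻ q, ENNReal.ofReal (|q.1 - q.2|) ∂π
      = ∫⁻ q, (∫⁻ s, (if q ∈ Bset s s then (1:ℝ≥0∞) else 0)) ∂π :=
        lintegral_congr (fun q => (pointwise_rep_one q).symm)
    _ = ∫⁻ s, (∫⁻ q, (if q ∈ Bset s s then (1:ℝ≥0∞) else 0) ∂π) := by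
        exact lintegral_lintegral_swap
          (f := fun q (s : ℝ) => if q ∈ Bset s s then (1:ℝ≥0∞) else 0)
          hmeas.aemeasurable
    _ = ∫⁻ s, π (Bset s s) := by
        refine lintegral_congr (fun s => ?_)
        rw [← one_mul (π (Bset s s)),
          ← lintegral_indicator_const (measurableSet_Bset s s) (1:ℝ≥0∞)]
        refine lintegral_congr (fun q => ?_)
        rw [Set.indicator_apply]


lemma Wpp_eq (p : ℝ) (hp : 1 ≤ p) (μ ν : Measure ℝ)
    [IsProbabilityMeasure μ] [IsProbabilityMeasure ν] :
    Wpp p μ ν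
      = ∫⁻ z in Set.Ioo (0:ℝ) 1, ENNReal.ofReal (|quantile μ z - quantile ν z| ^ p) := by
  set π₀ : Measure (ℝ × ℝ) :=
    (volume.restrict (Set.Ioo (0:ℝ) 1)).map (fun z => (quantile μ z, quantile ν z)) with hπ₀
  have hmem : π₀ ∈ couplings μ ν := by
    refine ⟨?_, ?_⟩
    · rw [hπ₀]; exact monoCoupling_fst μ ν
    · rw [hπ₀]; exact monoCoupling_snd μ ν
  have hdist : ∀ (π : Measure (ℝ × ℝ)),
      ∫⁻ z, ENNReal.ofReal (dist z.1 z.2 ^ p) ∂π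
        = ∫⁻ q, ENNReal.ofReal (|q.1 - q.2| ^ p) ∂π := by
    intro π; refine lintegral_congr fun q => ?_; rw [Real.dist_eq]
  haveI hπ₀fin : IsFiniteMeasure π₀ := by
    constructor
    rw [hπ₀, Measure.map_apply_of_aemeasurable (pair_aemeasurable μ ν) MeasurableSet.univ]
    simp [Real.volume_Ioo]
  have hub : ∀ {s t : ℝ}, s ≤ t → π₀ (Bset s t)
      ≤ (μ (Set.Iic s) - ν (Set.Iic t)) ⊔ (ν (Set.Iic s) - μ (Set.Iic t)) := by
    intro s t hst; rw [hπ₀]; exact upper_bound μ ν hst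
  have hcost₀ : ∫⁻ z, ENNReal.ofReal (dist z.1 z.2 ^ p) ∂π₀
      = ∫⁻ z in Set.Ioo (0:ℝ) 1, ENNReal.ofReal (|quantile μ z - quantile ν z| ^ p) := by
    rw [hdist, hπ₀]; exact monoCoupling_cost μ ν p
  refine le_antisymm ?_ ?_
  · rw [Wpp]
    exact le_trans (iInf₂_le π₀ hmem) (le_of_eq hcost₀)
  · rw [Wpp]
    refine le_iInf₂ fun π hπ => ?_
    haveI : IsProbabilityMeasure π := by
      constructor
      have h1 := congrArg (fun m : Measure ℝ => m Set.univ) hπ.1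
      rw [Measure.map_apply measurable_fst MeasurableSet.univ, Set.preimage_univ] at h1
      exact h1.trans measure_univ
    rw [hdist, ← hcost₀, hdist]
    rcases eq_or_lt_of_le hp with heq | hp1
    · subst heq
      have habs : ∀ (π' : Measure (ℝ × ℝ)),
          ∫⁻ q, ENNReal.ofReal (|q.1 - q.2| ^ (1:ℝ)) ∂π'
            = ∫⁻ q, ENNReal.ofReal (|q.1 - q.2|) ∂π' := by
        intro π'; refine lintegral_congr fun q => ?_; rw [Real.rpow_one]
      rw [habs, habs, cost_rep_one π₀, cost_rep_one π]
      refine lintegral_mono fun s => ?_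
      exact le_trans (hub (le_refl s)) (lower_bound μ ν π hπ.1 hπ.2 s s)
    · rw [cost_rep hp1 π₀, cost_rep hp1 π]
      refine lintegral_mono fun st => ?_
      by_cases h : st.1 < st.2
      · exact mul_le_mul_right
          (le_trans (hub h.le) (lower_bound μ ν π hπ.1 hπ.2 st.1 st.2)) _
      · simp [Kker, h]

end WassersteinAux

theorem stmt16 (p : ℝ) (hp : 1 ≤ p) (μ ν : Measure ℝ)
    [IsProbabilityMeasure μ] [IsProbabilityMeasure ν]
    (hμ : ∫⁻ x, ENNReal.ofReal (|x| ^ p) ∂μ < ⊤) (hν : ∫⁻ x, ENNReal.ofReal (|x| ^ p) ∂ν < ⊤) :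
    Wp p μ ν
      = (∫⁻ z in Set.Ioo (0 : ℝ) 1,
          ENNReal.ofReal (|quantile μ z - quantile ν z| ^ p)) ^ (1 / p) := by
  have key := Wpp_eq p hp μ ν
  rw [Wp, key]
end
end
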